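/- Let N ≥ 2 be an integer, q ∈ ℂ with q ≠ 0, and α, β ∈ ℂ with α ≠ 0 and α + 𝔰β ≠ 0. Let K(α,β) be the N² × N² matrix with entries K_{(ij),(kl)} = q^{−2i} α^{−1} δ_{il} δ_{jk} − (β/(α(α + 𝔰β))) q^{−2i−2k} δ_{ij} δ_{kl}. Then G(α,β)·K(α,β) = K(α,β)·G(α,β) = I, i.e. K(α,β) is the matrix of the dual metric g* of the invariant metric with parameters (α,β). -/

import Mathlib

open scoped BigOperators

namespace Stmt3

/-- Kronecker delta with values in `ℂ`. -/
noncomputable def kron {N : ℕ} (i j : Fin N) : ℂ := if i = j then 1 else 0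

/-- `𝔰 = Σ_{i=1}^{N} q^{−2i}`. -/
noncomputable def sconst (N : ℕ) (q : ℂ) : ℂ := ∑ i : Fin N, q ^ (-(2 * ((i.1 : ℤ) + 1)))

/-- The invariant-metric matrix `G(α,β)` with entries
`G_{(ij),(kl)} = q^{2j} α δ_{il} δ_{jk} + β δ_{ij} δ_{kl}` (indices `1,…,N`). -/
noncomputable def G (N : ℕ) (q α β : ℂ) : Matrix (Fin N × Fin N) (Fin N × Fin N) ℂ :=
  Matrix.of fun r c =>
    q ^ (2 * ((r.2.1 : ℤ) + 1)) * α * kron r.1 c.2 * kron r.2 c.1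
      + β * kron r.1 r.2 * kron c.1 c.2

/-- The dual-metric matrix `K(α,β)` with entries
`K_{(ij),(kl)} = q^{−2i} α⁻¹ δ_{il} δ_{jk} − (β/(α(α + 𝔰β))) q^{−2i−2k} δ_{ij} δ_{kl}`. -/
noncomputable def K (N : ℕ) (q α β : ℂ) : Matrix (Fin N × Fin N) (Fin N × Fin N) ℂ :=
  Matrix.of fun r c =>
    q ^ (-(2 * ((r.1.1 : ℤ) + 1))) * α⁻¹ * kron r.1 c.2 * kron r.2 c.1
      - (β / (α * (α + sconst N q * β))) *
          q ^ (-(2 * ((r.1.1 : ℤ) + 1)) - 2 * ((c.1.1 : ℤ) + 1)) *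
          kron r.1 r.2 * kron c.1 c.2


private lemma sum_shift (N : ℕ) (q : ℂ) (hq : q ≠ 0) (b : ℤ) :
    ∑ x : Fin N, q ^ (-(2 * ((x.1 : ℤ) + 1)) - b) = sconst N q * q ^ (-b) := by
  rw [sconst, Finset.sum_mul]
  exact Finset.sum_congr rfl fun x _ => by rw [← zpow_add₀ hq]; ring_nf

private lemma sum_shift' (N : ℕ) (q : ℂ) (hq : q ≠ 0) (a : ℤ) :
    ∑ x : Fin N, q ^ (a - (2 * (x.1 : ℤ) + 2)) = sconst N q * q ^ a := by
  rw [sconst, Finset.sum_mul]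
  exact Finset.sum_congr rfl fun x _ => by
    rw [← zpow_add₀ hq]; congr 1; ring

private lemma diag_one (q : ℂ) (hq : q ≠ 0) (α : ℂ) (hα : α ≠ 0) (a : ℤ) :
    q ^ a * α * (q ^ (-a) * α⁻¹) = 1 := by
  have h1 : q ^ a * q ^ (-a) = 1 := by rw [← zpow_add₀ hq]; simp
  calc q ^ a * α * (q ^ (-a) * α⁻¹) = (q ^ a * q ^ (-a)) * (α * α⁻¹) := by ring
  _ = 1 := by rw [h1, mul_inv_cancel₀ hα, mul_one]

private lemma diag_one' (q : ℂ) (hq : q ≠ 0) (α : ℂ) (hα : α ≠ 0) (a : ℤ) :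
    q ^ (-a) * α⁻¹ * (q ^ a * α) = 1 := by
  have h1 : q ^ (-a) * q ^ a = 1 := by rw [← zpow_add₀ hq]; simp
  calc q ^ (-a) * α⁻¹ * (q ^ a * α) = (q ^ (-a) * q ^ a) * (α⁻¹ * α) := by ring
  _ = 1 := by rw [h1, inv_mul_cancel₀ hα, mul_one]

private lemma GK_eq_one (N : ℕ) (q : ℂ) (hq : q ≠ 0) (α β : ℂ)
    (hα : α ≠ 0) (hαβ : α + sconst N q * β ≠ 0) :
    G N q α β * K N q α β = 1 := by
  ext ⟨i, j⟩ ⟨m, n⟩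
  rw [Matrix.mul_apply]
  simp only [G, K, Matrix.of_apply, kron, Fintype.sum_prod_type, Matrix.one_apply,
    mul_ite, ite_mul, mul_zero, zero_mul, mul_one, one_mul, mul_sub, sub_mul, add_mul,
    Finset.sum_sub_distrib, Finset.sum_add_distrib, Finset.sum_ite_eq, Finset.sum_ite_eq',
    Finset.mem_univ, if_true, Prod.mk.injEq]
  by_cases hmn : m = n
  · subst hmn
    simp only [if_pos rfl, if_true, Finset.sum_ite_eq, Finset.sum_ite_eq',
      Finset.mem_univ, Finset.sum_add_distrib, and_true]
    by_cases hij : i = j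
    · subst hij
      simp only [if_pos rfl, if_true, ← Finset.mul_sum, sum_shift N q hq]
      have h1 : q ^ (2 * ((i.1:ℤ) + 1)) * q ^ (-(2 * ((i.1:ℤ) + 1))) = 1 := by
        rw [← zpow_add₀ hq]; simp
      have h2 : q ^ (2 * ((i.1:ℤ) + 1)) * q ^ (-(2 * ((i.1:ℤ) + 1)) - 2 * ((m.1:ℤ) + 1))
          = q ^ (-(2 * ((m.1:ℤ) + 1))) := by rw [← zpow_add₀ hq]; ring_nf
      set s := sconst N q with hs
      set P := q ^ (2 * ((i.1:ℤ) + 1)) with hP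
      set Q := q ^ (-(2 * ((i.1:ℤ) + 1))) with hQ
      set T := q ^ (-(2 * ((i.1:ℤ) + 1)) - 2 * ((m.1:ℤ) + 1)) with hT
      set R := q ^ (-(2 * ((m.1:ℤ) + 1))) with hR
      by_cases him : i = m
      · subst him
        simp only [if_pos rfl, and_self, if_true]
        have hd : α + β * s ≠ 0 := by rwa [mul_comm β s]
        field_simp
        have h1' : P * R = 1 := h1
        linear_combination (α*(α+β*s)) * h1' + (-α*β) * h2
      · simp only [if_neg him, if_neg fun h : m = i => him h.symm, and_self]
        have hd : α + β * s ≠ 0 := by rwa [mul_comm β s]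
        field_simp
        linear_combination (-α*β) * h2
    · simp only [if_neg hij, Finset.sum_const_zero, add_zero, zero_add, sub_zero]
      by_cases hjm : j = m
      · subst hjm
        simp [hij]
      · simp [hjm]
  · simp only [if_neg hmn, if_neg fun h : n = m => hmn h.symm,
      Finset.sum_const_zero, add_zero, sub_zero]
    by_cases hjn : j = n
    · subst hjn
      by_cases him : i = m
      · subst him
        simp only [if_pos rfl, and_self, if_true]
        exact diag_one q hq α hα (2 * ((j.1:ℤ) + 1))
      · simp [him]
    · simp [hjn]

private lemma KG_eq_one (N : ℕ) (q : ℂ) (hq : q ≠ 0) (α β : ℂ)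
    (hα : α ≠ 0) (hαβ : α + sconst N q * β ≠ 0) :
    K N q α β * G N q α β = 1 := by
  ext ⟨i, j⟩ ⟨m, n⟩
  rw [Matrix.mul_apply]
  simp only [G, K, Matrix.of_apply, kron, Fintype.sum_prod_type, Matrix.one_apply,
    mul_ite, ite_mul, mul_zero, zero_mul, mul_one, one_mul, mul_sub, sub_mul, mul_add, add_mul,
    Finset.sum_sub_distrib, Finset.sum_add_distrib, Finset.sum_ite_eq, Finset.sum_ite_eq',
    Finset.mem_univ, if_true, Prod.mk.injEq]
  by_cases hmn : m = n
  · subst hmn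
    simp only [if_pos rfl, if_true, Finset.sum_ite_eq, Finset.sum_ite_eq',
      Finset.mem_univ, Finset.sum_sub_distrib, and_true]
    by_cases hij : i = j
    · subst hij
      simp only [if_pos rfl, if_true]
      rw [show (∑ x : Fin N, β / (α * α + α * (sconst N q * β)) *
            q ^ (-(2 * (i.1:ℤ) + 2) - (2 * (x.1:ℤ) + 2)) * β)
          = β / (α * α + α * (sconst N q * β)) *
            (sconst N q * q ^ (-(2 * (i.1:ℤ) + 2))) * β from by
        rw [← Finset.sum_mul, ← Finset.mul_sum, sum_shift' N q hq]]
      rw [show α * α + α * (sconst N q * β) = α * (α + sconst N q * β) from by ring]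
      set s := sconst N q with hs
      set P := q ^ (2 * (m.1:ℤ) + 2) with hP
      set Q := q ^ (-(2 * (i.1:ℤ) + 2)) with hQ
      set T := q ^ (-(2 * (i.1:ℤ) + 2) - (2 * (m.1:ℤ) + 2)) with hT
      have h2 : T * P = Q := by rw [hT, hP, hQ, ← zpow_add₀ hq]; congr 1; ring
      by_cases him : i = m
      · subst him
        have h1 : Q * P = 1 := by
          rw [hQ, hP, ← zpow_add₀ hq,
            show -(2 * (i.1:ℤ) + 2) + (2 * (i.1:ℤ) + 2) = 0 from by ring, zpow_zero]
        simp only [if_pos rfl, and_self, if_true]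
        have hd : α + β * s ≠ 0 := by rwa [mul_comm β s]
        field_simp
        linear_combination (α*(α+β*s)) * h1 + (-α*β) * h2
      · simp only [if_neg him, and_self]
        have hd : α + β * s ≠ 0 := by rwa [mul_comm β s]
        field_simp
        linear_combination (-α*β) * h2
    · simp only [if_neg hij, Finset.sum_const_zero, sub_zero, add_zero]
      by_cases hjm : j = m
      · subst hjm
        simp [hij]
      · simp [hjm]
  · simp only [if_neg hmn, if_neg fun h : n = m => hmn h.symm,
      Finset.sum_const_zero, add_zero, sub_zero]
    by_cases hjn : j = n
    · subst hjn
      by_cases him : i = m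
      · subst him
        simp only [if_pos rfl, and_self, if_true]
        exact diag_one' q hq α hα (2 * (i.1:ℤ) + 2)
      · simp [him]
    · simp [hjn]

/-- `K(α,β)` is the two-sided inverse of `G(α,β)`, i.e. the matrix of the dual metric `g*`. -/
theorem K_is_dual_metric (N : ℕ) (hN : 2 ≤ N) (q : ℂ) (hq : q ≠ 0) (α β : ℂ)
    (hα : α ≠ 0) (hαβ : α + sconst N q * β ≠ 0) :
    G N q α β * K N q α β = 1 ∧ K N q α β * G N q α β = 1 := by
  exact ⟨GK_eq_one N q hq α β hα hαβ, KG_eq_one N q hq α β hα hαβ⟩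

end Stmt3
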